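/- For each z ∈ Γ₊ let v_z ∈ A_Γ be the image of the sum of the edges of the distinguished path π_z from z to *, and set v_* = 0. Then for every covering edge e : x → y of Γ, the image of e in A_Γ equals v_x − v_y. -/

import Mathlib

/-- A finite ranked poset: a partial order with a unique minimal element `star`
and a rank function `rk` such that `rk star = 0`, covering relations increase the
rank by exactly one, and `rk` is strictly monotone (for a finite poset this is
equivalent to: all maximal chains in `[star, x]` have the same length `rk x`). -/
structure RankedPoset (Γ : Type) [PartialOrder Γ] where
  star : Γ
  rk : Γ → ℕ
  bot_le : ∀ x, star ≤ x
  rk_star : rk star = 0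
  rk_covBy : ∀ ⦃x y : Γ⦄, x ⋖ y → rk y = rk x + 1
  rk_strictMono : StrictMono rk

/-- A covering edge `x → y` of the poset `Γ`, recorded as the pair `(x, y)` with `y ⋖ x`. -/
abbrev RankedPoset.Edge (Γ : Type) [PartialOrder Γ] : Type := {p : Γ × Γ // p.2 ⋖ p.1}

variable {Γ : Type} [PartialOrder Γ] [DecidableEq Γ]

/-- The polynomial `(s - e₁)(s - e₂)⋯(s - eₙ)` attached to a list of edges, with
coefficients in the free algebra `T(W)` on the set of edges. -/
noncomputable def pathPoly (F : Type) [Field F] (l : List (RankedPoset.Edge Γ)) :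
    Polynomial (FreeAlgebra F (RankedPoset.Edge Γ)) :=
  (l.map fun e => Polynomial.X - Polynomial.C (FreeAlgebra.ι F e)).prod

/-- `eCoeff F l j` is `e(π, j)`: the coefficient of `s^(n-j)` in `(s-e₁)⋯(s-eₙ)`. -/
noncomputable def eCoeff (F : Type) [Field F] (l : List (RankedPoset.Edge Γ)) (j : ℕ) :
    FreeAlgebra F (RankedPoset.Edge Γ) :=
  (pathPoly F l).coeff (l.length - j)

/-- `IsPath b a l` : the list of covering edges `l` forms a path from `b` down to `a`. -/
def IsPath (b a : Γ) (l : List (RankedPoset.Edge Γ)) : Prop :=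
  l ≠ [] ∧ List.Chain' (fun e f => e.1.2 = f.1.1) l ∧
    (∀ e ∈ l.head?, e.1.1 = b) ∧ (∀ e ∈ l.getLast?, e.1.2 = a)

/-- The defining relations of the splitting algebra: `e(π,j) = e(π',j)` for any two
paths `π, π'` from `b` to `a` and any `0 ≤ j ≤ d(b,a)`. -/
inductive SplitRel (R : RankedPoset Γ) (F : Type) [Field F] :
    FreeAlgebra F (RankedPoset.Edge Γ) → FreeAlgebra F (RankedPoset.Edge Γ) → Prop
  | mk (a b : Γ) (hab : a < b) (l l' : List (RankedPoset.Edge Γ)) (j : ℕ)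
      (hl : IsPath b a l) (hl' : IsPath b a l') (hj : j ≤ R.rk b - R.rk a) :
      SplitRel R F (eCoeff F l j) (eCoeff F l' j)

/-- The splitting algebra `A_Γ = T(W)/I`. -/
abbrev SplittingAlgebra (R : RankedPoset Γ) (F : Type) [Field F] : Type :=
  RingQuot (SplitRel R F)

/-- The quotient map `T(W) → A_Γ`. -/
noncomputable abbrev splitMk (R : RankedPoset Γ) (F : Type) [Field F] :
    FreeAlgebra F (RankedPoset.Edge Γ) →ₐ[F] SplittingAlgebra R F :=
  RingQuot.mkAlgHom F (SplitRel R F)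


variable {Γ : Type} [PartialOrder Γ] [DecidableEq Γ]

/-- `vElt R F de hde z` is `v_z ∈ A_Γ`: the image of the sum of the edges of the
distinguished path `π_z` from `z` to `*` (and `v_* = 0`). -/
noncomputable def vElt (R : RankedPoset Γ) (F : Type) [Field F]
    (de : Γ → Γ) (hde : ∀ x, x ≠ R.star → de x ⋖ x) (z : Γ) : SplittingAlgebra R F :=
  if h : z = R.star then 0
  else splitMk R F (FreeAlgebra.ι F (⟨(z, de z), hde z h⟩ : RankedPoset.Edge Γ)) +
    vElt R F de hde (de z)
termination_by R.rk z
decreasing_by exact R.rk_strictMono (hde z h).lt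

/-! ### Auxiliary material -/

section PolyAux

variable {S : Type*} [Ring S]

/-- auxiliary: `(X - C a₁)⋯(X - C aₙ)` for a list of ring elements. -/
noncomputable def listPoly (l : List S) : Polynomial S :=
  (l.map fun a => Polynomial.X - Polynomial.C a).prod

lemma listPoly_cons (a : S) (t : List S) :
    listPoly (a :: t) = (Polynomial.X - Polynomial.C a) * listPoly t := rfl

lemma listPoly_natDegree_le (l : List S) : (listPoly l).natDegree ≤ l.length := by
  induction l with
  | nil => simp [listPoly]
  | cons a t ih =>
    rw [listPoly_cons]
    refine le_trans (Polynomial.natDegree_mul_le) ?_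
    have h1 : (Polynomial.X - Polynomial.C a).natDegree ≤ 1 :=
      Polynomial.natDegree_X_sub_C_le a
    simp only [List.length_cons]
    linarith [Nat.add_le_add h1 ih]

lemma listPoly_coeff_length (l : List S) : (listPoly l).coeff l.length = 1 := by
  induction l with
  | nil => simp [listPoly]
  | cons a t ih =>
    rw [listPoly_cons, sub_mul, Polynomial.coeff_sub]
    have h0 : (listPoly t).coeff (t.length + 1) = 0 :=
      Polynomial.coeff_eq_zero_of_natDegree_lt
        (lt_of_le_of_lt (listPoly_natDegree_le t) (Nat.lt_succ_self _))
    rw [List.length_cons, Polynomial.coeff_X_mul, Polynomial.coeff_C_mul, ih, h0,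
      mul_zero, sub_zero]

lemma listPoly_coeff_pred (l : List S) (hl : l ≠ []) :
    (listPoly l).coeff (l.length - 1) = -l.sum := by
  induction l with
  | nil => exact absurd rfl hl
  | cons a t ih =>
    rcases eq_or_ne t [] with rfl | ht
    · simp [listPoly]
    · rw [listPoly_cons, sub_mul, Polynomial.coeff_sub]
      have hlen : (a :: t).length - 1 = (t.length - 1) + 1 := by
        have : 1 ≤ t.length := List.length_pos_iff.mpr ht
        simp [List.length_cons]; omega
      rw [hlen, Polynomial.coeff_X_mul, Polynomial.coeff_C_mul]
      have h2 : (t.length - 1) + 1 = t.length := by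
        have : 1 ≤ t.length := List.length_pos_iff.mpr ht
        omega
      rw [ih ht, h2, listPoly_coeff_length, mul_one, List.sum_cons]
      abel

end PolyAux

lemma eCoeff_one (F : Type) [Field F] (l : List (RankedPoset.Edge Γ)) (hl : l ≠ []) :
    eCoeff F l 1 = -(l.map (FreeAlgebra.ι F)).sum := by
  have hmap : (l.map fun e => Polynomial.X - Polynomial.C (FreeAlgebra.ι F e)) =
      ((l.map (FreeAlgebra.ι F)).map fun a => Polynomial.X - Polynomial.C a) := by
    rw [List.map_map]; rfl
  have := listPoly_coeff_pred (l.map (FreeAlgebra.ι F)) (by simpa using hl)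
  rw [eCoeff, pathPoly, hmap]
  simpa [listPoly, List.length_map] using this

/-- The distinguished path from `z` down to `*`, as a list of covering edges. -/
noncomputable def dPath (R : RankedPoset Γ) (de : Γ → Γ)
    (hde : ∀ x, x ≠ R.star → de x ⋖ x) (z : Γ) : List (RankedPoset.Edge Γ) :=
  if h : z = R.star then []
  else (⟨(z, de z), hde z h⟩ : RankedPoset.Edge Γ) :: dPath R de hde (de z)
termination_by R.rk z
decreasing_by exact R.rk_strictMono (hde z h).lt

variable (R : RankedPoset Γ) (de : Γ → Γ) (hde : ∀ x, x ≠ R.star → de x ⋖ x)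

lemma dPath_eq_nil_iff (z : Γ) : dPath R de hde z = [] ↔ z = R.star := by
  rw [dPath]; split_ifs with h <;> simp [h]

lemma dPath_head (z : Γ) : ∀ f ∈ (dPath R de hde z).head?, f.1.1 = z := by
  rw [dPath]; split_ifs with h <;> simp

lemma dPath_chain (z : Γ) :
    List.Chain' (fun e f : RankedPoset.Edge Γ => e.1.2 = f.1.1) (dPath R de hde z) := by
  rw [dPath]; split_ifs with h
  · exact List.isChain_nil
  · rw [List.Chain', List.isChain_cons]
    exact ⟨fun f hf => (dPath_head R de hde (de z) f hf).symm, dPath_chain (de z)⟩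
termination_by R.rk z
decreasing_by exact R.rk_strictMono (hde z h).lt

lemma dPath_last (z : Γ) : ∀ f ∈ (dPath R de hde z).getLast?, f.1.2 = R.star := by
  rw [dPath]; split_ifs with h
  · simp
  · intro f hf
    rcases hnil : dPath R de hde (de z) with _ | ⟨b, t⟩
    · rw [hnil] at hf; simp at hf; subst hf
      exact (dPath_eq_nil_iff R de hde (de z)).mp hnil
    · rw [hnil, List.getLast?_cons_cons] at hf
      have := dPath_last (de z) f
      rw [hnil] at this
      exact this hf
termination_by R.rk z
decreasing_by exact R.rk_strictMono (hde z h).lt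

lemma isPath_cons (e : RankedPoset.Edge Γ) :
    IsPath e.1.1 R.star (e :: dPath R de hde e.1.2) := by
  refine ⟨List.cons_ne_nil _ _, ?_, ?_, ?_⟩
  · rw [List.Chain', List.isChain_cons]
    exact ⟨fun f hf => (dPath_head R de hde e.1.2 f hf).symm, dPath_chain R de hde e.1.2⟩
  · simp
  · intro f hf
    rcases hnil : dPath R de hde e.1.2 with _ | ⟨b, t⟩
    · rw [hnil] at hf; simp at hf; subst hf
      exact (dPath_eq_nil_iff R de hde e.1.2).mp hnil
    · rw [hnil, List.getLast?_cons_cons] at hf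
      have := dPath_last R de hde e.1.2 f
      rw [hnil] at this
      exact this hf

lemma isPath_dPath (z : Γ) (hz : z ≠ R.star) : IsPath z R.star (dPath R de hde z) := by
  rw [dPath, dif_neg hz]
  exact isPath_cons R de hde ⟨(z, de z), hde z hz⟩

lemma vElt_eq_sum (F : Type) [Field F] (z : Γ) :
    vElt R F de hde z =
      ((dPath R de hde z).map (fun f => splitMk R F (FreeAlgebra.ι F f))).sum := by
  rw [vElt, dPath]
  split_ifs with h
  · simp
  · rw [List.map_cons, List.sum_cons, vElt_eq_sum F (de z)]
termination_by R.rk z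
decreasing_by exact R.rk_strictMono (hde z h).lt

/-- For every covering edge `e : x → y` of `Γ`, the image of `e` in `A_Γ` equals
`v_x - v_y`. -/
theorem splitMk_edge_eq_vElt_sub_vElt
    {Γ : Type} [PartialOrder Γ] [DecidableEq Γ] [Fintype Γ]
    (R : RankedPoset Γ) (F : Type) [Field F]
    (de : Γ → Γ) (hde : ∀ x, x ≠ R.star → de x ⋖ x)
    (e : RankedPoset.Edge Γ) :
    splitMk R F (FreeAlgebra.ι F e) =
      vElt R F de hde e.1.1 - vElt R F de hde e.1.2 := by
  have hyx : e.1.2 ⋖ e.1.1 := e.2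
  have hlt : R.star < e.1.1 := lt_of_le_of_lt (R.bot_le e.1.2) hyx.lt
  have hx : e.1.1 ≠ R.star := fun h => absurd (h ▸ hlt) (lt_irrefl _)
  have h1 : IsPath e.1.1 R.star (e :: dPath R de hde e.1.2) := isPath_cons R de hde e
  have h2 : IsPath e.1.1 R.star (dPath R de hde e.1.1) := isPath_dPath R de hde e.1.1 hx
  have hj : (1 : ℕ) ≤ R.rk e.1.1 - R.rk R.star := by
    have := R.rk_strictMono hlt
    rw [R.rk_star] at this ⊢
    omega
  have hrel := RingQuot.mkAlgHom_rel F
    (SplitRel.mk (R := R) (F := F) R.star e.1.1 hlt (e :: dPath R de hde e.1.2) (dPath R de hde e.1.1) 1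
      h1 h2 hj)
  rw [eCoeff_one F _ (List.cons_ne_nil _ _),
    eCoeff_one F _ ((dPath_eq_nil_iff R de hde e.1.1).not.mpr hx)] at hrel
  rw [map_neg, map_neg, neg_inj, map_list_sum, map_list_sum, List.map_map, List.map_map,
    List.map_cons, List.sum_cons] at hrel
  simp only [Function.comp_def] at hrel
  rw [vElt_eq_sum R de hde F e.1.1, vElt_eq_sum R de hde F e.1.2]
  exact eq_sub_of_add_eq hrel
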